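/- The series ∑_{n=0}^∞ ∑_{k=0}^n [C(n,k)·p^k·(1-p)^{n-k}]^2 diverges for every p ∈ (0,1). -/

import Mathlib

open Finset Filter

theorem stmt_3 (p : ℝ) (hp : 0 < p) (hp1 : p < 1) :
    Tendsto (fun N => ∑ n ∈ Finset.range N, ∑ k ∈ Finset.range (n + 1),
      ((n.choose k : ℝ) * p ^ k * (1 - p) ^ (n - k)) ^ 2) atTop atTop := by
  apply tendsto_atTop_mono _ Real.tendsto_sum_range_one_div_nat_succ_atTop
  intro N
  apply Finset.sum_le_sum
  intro n _
  have hbin : ∑ k ∈ Finset.range (n + 1),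
      ((n.choose k : ℝ) * p ^ k * (1 - p) ^ (n - k)) = 1 := by
    conv_rhs => rw [show (1:ℝ) = (p + (1 - p)) ^ n by rw [add_sub_cancel, one_pow], add_pow]
    exact Finset.sum_congr rfl fun k _ => by ring
  have hcs := sum_mul_sq_le_sq_mul_sq (Finset.range (n + 1)) (fun _ => (1 : ℝ))
    (fun k => (n.choose k : ℝ) * p ^ k * (1 - p) ^ (n - k))
  simp only [one_mul, one_pow, Finset.sum_const, Finset.card_range, nsmul_eq_mul,
    mul_one, hbin, one_pow] at hcs
  have hn : (0 : ℝ) < (n : ℝ) + 1 := by positivity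
  rw [div_le_iff₀ hn]
  calc (1 : ℝ) = 1 ^ 2 := by ring
    _ ≤ ((n : ℝ) + 1) * ∑ k ∈ Finset.range (n + 1),
        ((n.choose k : ℝ) * p ^ k * (1 - p) ^ (n - k)) ^ 2 := by
        rw [one_pow]; exact_mod_cast hcs
    _ = _ := by ring
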